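/- Let m ≥ 1 be an integer, q₀ = 2^m, q = 2q₀², and let 𝒫 ⊆ ℕ be the additive submonoid generated by q, q+q₀, q+2q₀, and q+2q₀+1. Then the set of natural numbers not belonging to 𝒫 has exactly q₀(q−1) elements. -/

import Mathlib

section SuzukiAux

lemma two_digit (Q a b a' b' : ℕ) (hb : b < Q) (hb' : b' < Q)
    (h : a * Q + b = a' * Q + b') : a = a' ∧ b = b' := by
  have h1 : (a * Q + b) % Q = b := by
    rw [Nat.add_comm, Nat.add_mul_mod_self_right, Nat.mod_eq_of_lt hb]
  have h2 : (a' * Q + b') % Q = b' := by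
    rw [Nat.add_comm, Nat.add_mul_mod_self_right, Nat.mod_eq_of_lt hb']
  have hbb : b = b' := by rw [← h1, ← h2, h]
  subst hbb
  have : a * Q = a' * Q := by omega
  exact ⟨Nat.eq_of_mul_eq_mul_right (by omega) this, rfl⟩

lemma digits_unique (q₀ A B C A' B' C' : ℕ) (hC : C < q₀) (hC' : C' < q₀)
    (hB : B < 2 * q₀) (hB' : B' < 2 * q₀)
    (h : A * (2 * q₀ ^ 2) + B * q₀ + C = A' * (2 * q₀ ^ 2) + B' * q₀ + C') :
    A = A' ∧ B = B' ∧ C = C' := by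
  have e1 : (A * (2 * q₀) + B) * q₀ + C = (A' * (2 * q₀) + B') * q₀ + C' := by
    rw [show (A * (2 * q₀) + B) * q₀ + C = A * (2 * q₀ ^ 2) + B * q₀ + C from by ring,
      show (A' * (2 * q₀) + B') * q₀ + C' = A' * (2 * q₀ ^ 2) + B' * q₀ + C' from by ring]
    exact h
  obtain ⟨e2, eC⟩ := two_digit q₀ _ _ _ _ hC hC' e1
  obtain ⟨eA, eB⟩ := two_digit (2 * q₀) _ _ _ _ hB hB' e2
  exact ⟨eA, eB, eC⟩

lemma digits_exist (q₀ n : ℕ) (hq₀ : 0 < q₀) :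
    ∃ A B C, C < q₀ ∧ B < 2 * q₀ ∧ n = A * (2 * q₀ ^ 2) + B * q₀ + C := by
  have hq : 0 < 2 * q₀ ^ 2 := by positivity
  refine ⟨n / (2 * q₀ ^ 2), n % (2 * q₀ ^ 2) / q₀, n % q₀, Nat.mod_lt n hq₀, ?_, ?_⟩
  · rw [Nat.div_lt_iff_lt_mul hq₀, show 2 * q₀ * q₀ = 2 * q₀ ^ 2 from by ring]
    exact Nat.mod_lt n hq
  · have h1 : 2 * q₀ ^ 2 * (n / (2 * q₀ ^ 2)) + n % (2 * q₀ ^ 2) = n :=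
      Nat.div_add_mod n (2 * q₀ ^ 2)
    have h2 : q₀ * (n % (2 * q₀ ^ 2) / q₀) + n % q₀ = n % (2 * q₀ ^ 2) := by
      have := Nat.div_add_mod (n % (2 * q₀ ^ 2)) q₀
      rwa [Nat.mod_mod_of_dvd n ⟨2 * q₀, by ring⟩] at this
    conv_lhs => rw [← h1, ← h2]
    ring

lemma mem_closure_iff_rep (q₀ q n : ℕ) :
    n ∈ AddSubmonoid.closure ({q, q + q₀, q + 2 * q₀, q + 2 * q₀ + 1} : Set ℕ) ↔
      ∃ a b c d : ℕ, n = a * q + b * (q + q₀) + c * (q + 2 * q₀) + d * (q + 2 * q₀ + 1) := by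
  constructor
  · intro h
    induction h using AddSubmonoid.closure_induction with
    | mem x hx =>
      simp only [Set.mem_insert_iff, Set.mem_singleton_iff] at hx
      rcases hx with h | h | h | h
      · exact ⟨1, 0, 0, 0, by omega⟩
      · exact ⟨0, 1, 0, 0, by omega⟩
      · exact ⟨0, 0, 1, 0, by omega⟩
      · exact ⟨0, 0, 0, 1, by omega⟩
    | zero => exact ⟨0, 0, 0, 0, by omega⟩
    | add x y hx hy ihx ihy =>
      obtain ⟨a, b, c, d, rfl⟩ := ihx
      obtain ⟨a', b', c', d', rfl⟩ := ihy
      exact ⟨a + a', b + b', c + c', d + d', by ring⟩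
  · rintro ⟨a, b, c, d, rfl⟩
    have hg : ∀ x ∈ ({q, q + q₀, q + 2 * q₀, q + 2 * q₀ + 1} : Set ℕ),
        x ∈ AddSubmonoid.closure ({q, q + q₀, q + 2 * q₀, q + 2 * q₀ + 1} : Set ℕ) :=
      fun x hx => AddSubmonoid.subset_closure hx
    have mul_mem : ∀ (k x : ℕ),
        x ∈ AddSubmonoid.closure ({q, q + q₀, q + 2 * q₀, q + 2 * q₀ + 1} : Set ℕ) →
        k * x ∈ AddSubmonoid.closure ({q, q + q₀, q + 2 * q₀, q + 2 * q₀ + 1} : Set ℕ) := by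
      intro k x hx
      simpa [nsmul_eq_mul] using AddSubmonoid.nsmul_mem _ hx k
    exact AddSubmonoid.add_mem _ (AddSubmonoid.add_mem _ (AddSubmonoid.add_mem _
      (mul_mem a q (hg q (by simp))) (mul_mem b _ (hg _ (by simp))))
      (mul_mem c _ (hg _ (by simp)))) (mul_mem d _ (hg _ (by simp)))

lemma rep_iff_stu (q₀ q n : ℕ) (hq : q = 2 * q₀ ^ 2) :
    (∃ a b c d : ℕ, n = a * q + b * (q + q₀) + c * (q + 2 * q₀) + d * (q + 2 * q₀ + 1)) ↔
      ∃ s t u : ℕ, 2 * u ≤ t ∧ t ≤ 2 * s ∧ n = s * q + t * q₀ + u := by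
  constructor
  · rintro ⟨a, b, c, d, rfl⟩
    refine ⟨a + b + c + d, b + 2 * c + 2 * d, d, by omega, by omega, by ring⟩
  · rintro ⟨s, t, u, h1, h2, rfl⟩
    have key : ∀ a b c d : ℕ, a + b + c + d = s → b + 2 * c + 2 * d = t → d = u →
        s * q + t * q₀ + u = a * q + b * (q + q₀) + c * (q + 2 * q₀) + d * (q + 2 * q₀ + 1) := by
      rintro a b c d rfl rfl rfl
      ring
    exact ⟨s - u - (t - 2 * u) / 2 - (t - 2 * u) % 2, (t - 2 * u) % 2, (t - 2 * u) / 2, u,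
      key _ _ _ _ (by omega) (by omega) rfl⟩

lemma stu_iff_cond (q₀ A B C : ℕ) (hq₀ : 0 < q₀) (hC : C < q₀) (hB : B < 2 * q₀) :
    (∃ s t u : ℕ, 2 * u ≤ t ∧ t ≤ 2 * s ∧
        A * (2 * q₀ ^ 2) + B * q₀ + C = s * (2 * q₀ ^ 2) + t * q₀ + u) ↔
      ((2 * C ≤ B ∧ B ≤ 2 * A) ∨ B + 2 * q₀ + 2 ≤ 2 * A) := by
  constructor
  · rintro ⟨s, t, u, h1, h2, h⟩
    have hCu : u % q₀ = C := by
      have e1 : (A * (2 * q₀ ^ 2) + B * q₀ + C) % q₀ = C := by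
        rw [show A * (2 * q₀ ^ 2) + B * q₀ + C = C + (A * (2 * q₀) + B) * q₀ from by ring,
          Nat.add_mul_mod_self_right, Nat.mod_eq_of_lt hC]
      have e2 : (s * (2 * q₀ ^ 2) + t * q₀ + u) % q₀ = u % q₀ := by
        rw [show s * (2 * q₀ ^ 2) + t * q₀ + u = u + (s * (2 * q₀) + t) * q₀ from by ring,
          Nat.add_mul_mod_self_right]
      rw [← e1, h, e2]
    obtain ⟨u₁, rfl⟩ : ∃ u₁, u = u₁ * q₀ + C := by
      refine ⟨u / q₀, ?_⟩
      conv_lhs => rw [← Nat.div_add_mod u q₀]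
      rw [hCu, Nat.mul_comm]
    have E : A * q₀ * 2 + B = s * q₀ * 2 + t + u₁ := by
      have e3 : (A * q₀ * 2 + B) * q₀ + C = (s * q₀ * 2 + t + u₁) * q₀ + C := by
        rw [show (A * q₀ * 2 + B) * q₀ + C = A * (2 * q₀ ^ 2) + B * q₀ + C from by ring, h]
        ring
      have e4 : (A * q₀ * 2 + B) * q₀ = (s * q₀ * 2 + t + u₁) * q₀ := by omega
      exact Nat.eq_of_mul_eq_mul_right hq₀ e4
    have f1 : 2 * (u₁ * q₀) + 2 * C ≤ t := by omega
    clear h hCu h1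
    have hsA : s ≤ A := by
      by_contra hcon
      have hb : A * q₀ + q₀ ≤ s * q₀ := by
        have := Nat.mul_le_mul_right q₀ (show A + 1 ≤ s by omega)
        nlinarith
      omega
    obtain ⟨k, rfl⟩ : ∃ k, A = s + k := ⟨A - s, by omega⟩
    have E2 : t + u₁ = 2 * (k * q₀) + B := by
      have hx : (s + k) * q₀ = s * q₀ + k * q₀ := add_mul s k q₀
      generalize s * q₀ = z at E hx
      generalize k * q₀ = y at hx ⊢
      omega
    clear E hsA
    have hu₁k : u₁ ≤ k := by
      by_contra hcon
      have hb : k * q₀ + q₀ ≤ u₁ * q₀ := by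
        have := Nat.mul_le_mul_right q₀ (show k + 1 ≤ u₁ by omega)
        nlinarith
      generalize k * q₀ = y at E2 hb
      generalize u₁ * q₀ = x at f1 hb
      omega
    rcases le_or_gt (2 * C) B with hcase | hcase
    · left
      refine ⟨hcase, ?_⟩
      generalize k * q₀ = y at E2
      omega
    · right
      have hk1 : u₁ + 1 ≤ k := by
        by_contra hcon
        have hke : k = u₁ := by omega
        subst hke
        generalize k * q₀ = y at E2 f1
        omega
      have hb : u₁ * q₀ + q₀ ≤ k * q₀ := by
        have := Nat.mul_le_mul_right q₀ hk1
        nlinarith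
      generalize k * q₀ = y at E2 hb
      generalize u₁ * q₀ = x at f1 hb
      omega
  · rintro (⟨h1, h2⟩ | h)
    · exact ⟨A, B, C, h1, h2, rfl⟩
    · refine ⟨A - 1, B + 2 * q₀, C, by omega, by omega, ?_⟩
      obtain ⟨A', rfl⟩ : ∃ A', A = A' + 1 := ⟨A - 1, by omega⟩
      simp only [Nat.add_sub_cancel]
      ring

def aCnt (q₀ B C : ℕ) : ℕ := (B + 1) / 2 + (if B < 2 * C then q₀ + 1 else 0)

lemma sum_half (n : ℕ) : (∑ B ∈ Finset.range (2 * n), (B + 1) / 2) = n ^ 2 := by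
  induction n with
  | zero => simp
  | succ n ih =>
    rw [show 2 * (n + 1) = 2 * n + 1 + 1 from by ring, Finset.sum_range_succ,
      Finset.sum_range_succ, ih]
    have h : (n + 1) ^ 2 = n ^ 2 + 2 * n + 1 := by ring
    rw [h]
    generalize n ^ 2 = M
    omega

lemma sum_ite_lt (N L c : ℕ) (h : L ≤ N) :
    (∑ B ∈ Finset.range N, (if B < L then c else 0)) = L * c := by
  rw [← Finset.sum_subset (Finset.range_subset_range.2 h)
    (fun x _ hx => if_neg (by simp at hx ⊢; omega))]
  rw [Finset.sum_congr rfl (fun x hx => if_pos (Finset.mem_range.1 hx)), Finset.sum_const,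
    Finset.card_range, smul_eq_mul]

lemma sum_aCnt (q₀ C : ℕ) (hC : C < q₀) :
    (∑ B ∈ Finset.range (2 * q₀), aCnt q₀ B C) = q₀ ^ 2 + 2 * C * (q₀ + 1) := by
  unfold aCnt
  rw [Finset.sum_add_distrib, sum_half, sum_ite_lt _ _ _ (by omega)]

lemma total_sum (q₀ : ℕ) (h1 : 1 ≤ q₀) :
    (∑ C ∈ Finset.range q₀, ∑ B ∈ Finset.range (2 * q₀), aCnt q₀ B C)
      = q₀ * (2 * q₀ ^ 2 - 1) := by
  rw [Finset.sum_congr rfl (fun C hC => sum_aCnt q₀ C (Finset.mem_range.1 hC))]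
  rw [Finset.sum_add_distrib, Finset.sum_const, Finset.card_range, smul_eq_mul]
  have hg : (∑ C ∈ Finset.range q₀, 2 * C * (q₀ + 1)) = q₀ * (q₀ - 1) * (q₀ + 1) := by
    rw [show (∑ C ∈ Finset.range q₀, 2 * C * (q₀ + 1))
        = ((∑ C ∈ Finset.range q₀, C) * 2) * (q₀ + 1) from by
      rw [Finset.sum_mul, Finset.sum_mul]; exact Finset.sum_congr rfl fun x _ => by ring]
    rw [Finset.sum_range_id_mul_two]
  rw [hg]
  obtain ⟨k, rfl⟩ : ∃ k, q₀ = k + 1 := ⟨q₀ - 1, by omega⟩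
  simp only [Nat.add_sub_cancel]
  rw [show 2 * (k + 1) ^ 2 - 1 = 2 * k ^ 2 + 4 * k + 1 from by
    rw [show 2 * (k + 1) ^ 2 = (2 * k ^ 2 + 4 * k + 1) + 1 from by ring, Nat.add_sub_cancel]]
  ring

lemma gap_iff_lt_aCnt (q₀ A B C : ℕ) (hq₀ : 0 < q₀) (hC : C < q₀) (hB : B < 2 * q₀) :
    (¬ ((2 * C ≤ B ∧ B ≤ 2 * A) ∨ B + 2 * q₀ + 2 ≤ 2 * A)) ↔ A < aCnt q₀ B C := by
  unfold aCnt
  split <;> omega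

end SuzukiAux

theorem suzuki_semigroup_gap_count
    (m q₀ q : ℕ) (hm : 1 ≤ m) (hq₀ : q₀ = 2 ^ m) (hq : q = 2 * q₀ ^ 2)
    (P : AddSubmonoid ℕ)
    (hP : P = AddSubmonoid.closure ({q, q + q₀, q + 2 * q₀, q + 2 * q₀ + 1} : Set ℕ)) :
    Set.ncard {n : ℕ | n ∉ P} = q₀ * (q - 1) := by
  have hq₀pos : 0 < q₀ := by rw [hq₀]; positivity
  have hPmem : ∀ n : ℕ, n ∈ P ↔
      ∃ s t u : ℕ, 2 * u ≤ t ∧ t ≤ 2 * s ∧ n = s * (2 * q₀ ^ 2) + t * q₀ + u := by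
    intro n
    rw [hP, mem_closure_iff_rep q₀ q n, rep_iff_stu q₀ q n hq, hq]
  set f : (Σ _ : ℕ, Σ _ : ℕ, ℕ) → ℕ :=
    fun x => x.2.2 * (2 * q₀ ^ 2) + x.2.1 * q₀ + x.1 with hf
  set T : Finset (Σ _ : ℕ, Σ _ : ℕ, ℕ) :=
    (Finset.range q₀).sigma fun C => (Finset.range (2 * q₀)).sigma fun B =>
      Finset.range (aCnt q₀ B C) with hT
  have hmemT : ∀ x : (Σ _ : ℕ, Σ _ : ℕ, ℕ),
      x ∈ T ↔ x.1 < q₀ ∧ x.2.1 < 2 * q₀ ∧ x.2.2 < aCnt q₀ x.2.1 x.1 := by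
    intro x
    simp [hT, Finset.mem_sigma, Finset.mem_range]
  have hset : {n : ℕ | n ∉ P} = ↑(T.image f) := by
    ext n
    obtain ⟨A, B, C, hC, hB, hn⟩ := digits_exist q₀ n hq₀pos
    simp only [Set.mem_setOf_eq, Finset.coe_image, Set.mem_image, Finset.mem_coe]
    constructor
    · intro hnP
      refine ⟨⟨C, B, A⟩, ?_, ?_⟩
      · rw [hmemT]
        refine ⟨hC, hB, ?_⟩
        rw [← gap_iff_lt_aCnt q₀ A B C hq₀pos hC hB, ← stu_iff_cond q₀ A B C hq₀pos hC hB]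
        intro hcon
        apply hnP
        rw [hPmem, hn]
        exact hcon
      · simp [hf, hn.symm]
    · rintro ⟨⟨C', B', A'⟩, hxT, hfx⟩
      rw [hmemT] at hxT
      obtain ⟨hC', hB', hA'⟩ := hxT
      simp only [hf] at hfx
      have heq : A' = A ∧ B' = B ∧ C' = C := by
        apply digits_unique q₀ A' B' C' A B C hC' hC hB' hB
        rw [hfx, hn]
      obtain ⟨e1, e2, e3⟩ := heq
      rw [e1, e2, e3] at hA'
      intro hnP
      rw [hPmem, hn, stu_iff_cond q₀ A B C hq₀pos hC hB] at hnP
      exact (gap_iff_lt_aCnt q₀ A B C hq₀pos hC hB).2 hA' hnP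
  rw [hset, Set.ncard_coe_finset]
  have hinj : Set.InjOn f ↑T := by
    rintro ⟨C1, B1, A1⟩ h1 ⟨C2, B2, A2⟩ h2 heq
    rw [Finset.mem_coe, hmemT] at h1 h2
    simp only [hf] at heq
    obtain ⟨hA, hB, hC⟩ := digits_unique q₀ A1 B1 C1 A2 B2 C2 h1.1 h2.1 h1.2.1 h2.2.1 heq
    subst hA; subst hB; subst hC
    rfl
  rw [Finset.card_image_of_injOn hinj, hT, Finset.card_sigma]
  have : ∀ C ∈ Finset.range q₀,
      ((Finset.range (2 * q₀)).sigma fun B => Finset.range (aCnt q₀ B C)).card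
        = ∑ B ∈ Finset.range (2 * q₀), aCnt q₀ B C := by
    intro C _
    rw [Finset.card_sigma]
    simp
  rw [Finset.sum_congr rfl this, total_sum q₀ hq₀pos, hq]
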